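/- Let (X, d) be a complete metric space and T : X → X continuous. Suppose there are points x, y ∈ X and ε > 0 such that x ∈ J(w) for every w ∈ B(y, ε). Then the set D = { z ∈ closure(B(y, ε)) : x ∈ L(z) } is a dense G_δ subset of closure(B(y, ε)). -/

import Mathlib

open Filter Topology Set Metric

/-- The limit set `L(x)`: limits of subsequences `T^[kₙ] x` along a strictly
increasing sequence of positive integers. -/
def limitSet {X : Type*} [TopologicalSpace X] (T : X → X) (x : X) : Set X :=
  {y | ∃ k : ℕ → ℕ, StrictMono k ∧ (∀ n, 0 < k n) ∧
    Tendsto (fun n => T^[k n] x) atTop (𝓝 y)}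

/-- The extended (prolongational) limit set `J(x)`. -/
def extLimitSet {X : Type*} [TopologicalSpace X] (T : X → X) (x : X) : Set X :=
  {y | ∃ k : ℕ → ℕ, StrictMono k ∧ (∀ n, 0 < k n) ∧
    ∃ u : ℕ → X, Tendsto u atTop (𝓝 x) ∧
      Tendsto (fun n => T^[k n] (u n)) atTop (𝓝 y)}

/-- Topological transitivity. -/
def TopTransitive {X : Type*} [TopologicalSpace X] (T : X → X) : Prop :=
  ∀ U V : Set X, IsOpen U → IsOpen V → U.Nonempty → V.Nonempty →
    ∃ n : ℕ, (T^[n] '' U ∩ V).Nonempty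

lemma mem_limitSet_iff_aux {X : Type*} [MetricSpace X] (T : X → X) (x z : X) :
    x ∈ limitSet T z ↔ ∀ m : ℕ, ∃ n, m < n ∧ T^[n] z ∈ ball x (1 / (m + 1)) := by
  constructor
  · rintro ⟨k, hk, -, hlim⟩ m
    have hpos : (0 : ℝ) < 1 / (m + 1) := by positivity
    have hev : ∀ᶠ n in atTop, T^[k n] z ∈ ball x (1 / (m + 1)) :=
      hlim.eventually (ball_mem_nhds x hpos)
    obtain ⟨N, hNb, hNge⟩ := (hev.and (eventually_ge_atTop (m + 1))).exists
    have h2 : N ≤ k N := hk.le_apply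
    exact ⟨k N, by omega, hNb⟩
  · intro hfreq
    have hcl : MapClusterPt x atTop (fun n => T^[n] z) := by
      rw [mapClusterPt_iff_frequently]
      intro s hs
      obtain ⟨r, hr, hball⟩ := Metric.mem_nhds_iff.1 hs
      rw [frequently_atTop]
      intro a
      obtain ⟨m₀, hm₀⟩ := exists_nat_one_div_lt hr
      set m := max m₀ a with hm
      obtain ⟨n, hn, hnball⟩ := hfreq m
      refine ⟨n, le_of_lt (lt_of_le_of_lt (le_max_right m₀ a) hn), hball ?_⟩
      refine lt_of_lt_of_le (lt_of_lt_of_le hnball ?_) hm₀.le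
      apply one_div_le_one_div_of_le (by positivity)
      have : (m₀ : ℝ) ≤ m := by exact_mod_cast le_max_left m₀ a
      linarith
    obtain ⟨ψ, hψ, hψlim⟩ := TopologicalSpace.FirstCountableTopology.tendsto_subseq hcl
    refine ⟨fun n => ψ (n + 1), fun a b hab => hψ (by omega), fun n =>
      lt_of_lt_of_le (Nat.succ_pos n) hψ.le_apply, ?_⟩
    exact hψlim.comp (tendsto_add_atTop_nat 1)

theorem stmt2 {X : Type*} [MetricSpace X] [CompleteSpace X] (T : X → X)
    (hT : Continuous T) (x y : X) (ε : ℝ) (hε : 0 < ε)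
    (h : ∀ w ∈ ball y ε, x ∈ extLimitSet T w) :
    IsGδ {z : closure (ball y ε) | x ∈ limitSet T (z : X)} ∧
      Dense {z : closure (ball y ε) | x ∈ limitSet T (z : X)} := by
  set S : ℕ → Set X := fun m => ⋃ n ∈ Set.Ioi m, T^[n] ⁻¹' ball x (1 / (m + 1)) with hS
  have hSopen : ∀ m, IsOpen (S m) := fun m =>
    isOpen_biUnion fun n _ => isOpen_ball.preimage (hT.iterate n)
  have hset : {z : closure (ball y ε) | x ∈ limitSet T (z : X)} =
      ⋂ m, ((↑) : closure (ball y ε) → X) ⁻¹' S m := by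
    ext z
    simp only [Set.mem_setOf_eq, Set.mem_iInter, Set.mem_preimage, hS, Set.mem_iUnion,
      Set.mem_Ioi, exists_prop, mem_limitSet_iff_aux, Set.mem_preimage]
  have hopen : ∀ m, IsOpen (((↑) : closure (ball y ε) → X) ⁻¹' S m) := fun m =>
    (hSopen m).preimage continuous_subtype_val
  have hdense : ∀ m, Dense (((↑) : closure (ball y ε) → X) ⁻¹' S m) := by
    intro m
    rw [dense_iff_inter_open]
    rintro U hU ⟨u₀, hu₀⟩
    obtain ⟨V, hV, rfl⟩ := isOpen_induced_iff.1 hU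
    have hu₀cl : (u₀ : X) ∈ closure (ball y ε) := u₀.2
    have : (V ∩ ball y ε).Nonempty := by
      rw [_root_.mem_closure_iff] at hu₀cl
      exact hu₀cl V hV hu₀
    obtain ⟨w, hwV, hwb⟩ := this
    obtain ⟨k, hk, -, u, hu, hTu⟩ := h w hwb
    have hevV : ∀ᶠ n in atTop, u n ∈ V := hu.eventually (hV.mem_nhds hwV)
    have hevb : ∀ᶠ n in atTop, u n ∈ ball y ε := hu.eventually (isOpen_ball.mem_nhds hwb)
    have hpos : (0 : ℝ) < 1 / (m + 1) := by positivity
    have hevx : ∀ᶠ n in atTop, T^[k n] (u n) ∈ ball x (1 / (m + 1)) :=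
      hTu.eventually (ball_mem_nhds x hpos)
    obtain ⟨n, hnV, hnb, hnx, hnge⟩ :=
      (hevV.and (hevb.and (hevx.and (eventually_ge_atTop (m + 1))))).exists
    refine ⟨⟨u n, subset_closure hnb⟩, ⟨hnV, ?_⟩⟩
    simp only [Set.mem_preimage, hS, Set.mem_iUnion, Set.mem_Ioi, exists_prop]
    have h2 : n ≤ k n := hk.le_apply
    exact ⟨k n, by omega, hnx⟩
  have : IsClosed (closure (ball y ε)) := isClosed_closure
  haveI : CompleteSpace (closure (ball y ε)) := this.completeSpace_coe
  rw [hset]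
  exact ⟨IsGδ.iInter fun m => (hopen m).isGδ, dense_iInter_of_isOpen hopen hdense⟩
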